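/- Let P be a polynomial with real coefficients of degree N >= 1 whose leading coefficient and constant coefficient both have absolute value 1. Suppose that all complex roots of P have the same absolute value. Then the absolute value of the coefficient of z in P equals the absolute value of the coefficient of z^{N-1} in P. -/

import Mathlib

lemma my_powersetCard_self {α : Type*} (s : Multiset α) :
    s.powersetCard (Multiset.card s) = {s} := by
  have h1 : Multiset.card (s.powersetCard (Multiset.card s)) = 1 := by
    rw [Multiset.card_powersetCard, Nat.choose_self]
  obtain ⟨t, ht⟩ := Multiset.card_eq_one.mp h1
  have := Multiset.mem_powersetCard.mp (ht ▸ Multiset.mem_singleton_self t)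
  rw [ht, Multiset.eq_of_le_of_card_le this.1 (le_of_eq this.2.symm)]

lemma my_esymm_card {R : Type*} [CommSemiring R] (s : Multiset R) :
    s.esymm (Multiset.card s) = s.prod := by
  rw [Multiset.esymm, my_powersetCard_self]
  simp

lemma my_esymm_one {R : Type*} [CommSemiring R] (s : Multiset R) :
    s.esymm 1 = s.sum := by
  rw [Multiset.esymm, Multiset.powersetCard_one, Multiset.map_map]
  simp

lemma my_esymm_cons {R : Type*} [CommSemiring R] (a : R) (s : Multiset R) (n : ℕ) :
    (a ::ₘ s).esymm (n + 1) = s.esymm (n + 1) + a * s.esymm n := by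
  rw [Multiset.esymm, Multiset.powersetCard_cons, Multiset.map_add, Multiset.sum_add,
    Multiset.map_map, Multiset.esymm]
  congr 1
  rw [Multiset.esymm, ← Multiset.sum_map_mul_left]
  congr 1
  exact Multiset.map_congr rfl fun t _ => by simp

lemma my_esymm_pred {K : Type*} [Field K] (s : Multiset K) (hne : s ≠ 0)
    (h0 : (0 : K) ∉ s) :
    s.esymm (Multiset.card s - 1) = s.prod * (s.map (·⁻¹)).sum := by
  induction s using Multiset.induction with
  | empty => exact absurd rfl hne
  | cons a t ih =>
    have ha : a ≠ 0 := fun h => h0 (h ▸ Multiset.mem_cons_self a t)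
    have h0t : (0 : K) ∉ t := fun h => h0 (Multiset.mem_cons_of_mem h)
    rcases eq_or_ne t 0 with rfl | htne
    · simp [Multiset.esymm, Multiset.powersetCard_zero_left, mul_add,
        mul_inv_cancel₀ ha]
    · obtain ⟨k, hk⟩ : ∃ k, Multiset.card t = k + 1 :=
        ⟨Multiset.card t - 1, (Nat.succ_pred_eq_of_pos (Multiset.card_pos.mpr htne)).symm⟩
      have hcard : Multiset.card (a ::ₘ t) - 1 = k + 1 := by
        rw [Multiset.card_cons, hk]; omega
      rw [hcard, my_esymm_cons]
      have h1 : t.esymm (k + 1) = t.prod := by rw [← hk, my_esymm_card]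
      have h2 : t.esymm k = t.prod * (t.map (·⁻¹)).sum := by
        have := ih htne h0t
        rwa [hk, Nat.add_sub_cancel] at this
      rw [h1, h2, Multiset.prod_cons, Multiset.map_cons, Multiset.sum_cons]
      field_simp

theorem stmt12 (P : Polynomial ℝ) (hdeg : 1 ≤ P.natDegree)
    (hlead : |P.leadingCoeff| = 1) (hconst : |P.coeff 0| = 1)
    (hroots : ∀ z w : ℂ, (P.map (algebraMap ℝ ℂ)).IsRoot z →
      (P.map (algebraMap ℝ ℂ)).IsRoot w → ‖z‖ = ‖w‖) :
    |P.coeff 1| = |P.coeff (P.natDegree - 1)| := by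
  classical
  set Q := P.map (algebraMap ℝ ℂ) with hQdef
  have hP0 : P ≠ 0 := by
    intro h; rw [h] at hlead; simp at hlead
  have hQ0 : Q ≠ 0 := by
    simpa [hQdef] using (Polynomial.map_ne_zero (f := algebraMap ℝ ℂ) hP0 :)
  have hQdeg : Q.natDegree = P.natDegree := Polynomial.natDegree_map (algebraMap ℝ ℂ)
  have hcoeff : ∀ k, Q.coeff k = ((P.coeff k : ℝ) : ℂ) := fun k => Polynomial.coeff_map _ k
  have hsplit : Q.Splits := IsAlgClosed.splits Q
  have hcard : Multiset.card Q.roots = Q.natDegree :=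
    (Polynomial.splits_iff_card_roots).mp hsplit
  set n := P.natDegree with hn
  -- roots nonempty
  have hrne : Q.roots ≠ 0 := by
    intro h
    rw [h] at hcard
    simp [hQdeg, hn] at hcard
    omega
  obtain ⟨z₀, hz₀⟩ := Multiset.exists_mem_of_ne_zero hrne
  set r := ‖z₀‖ with hr
  have hmem : ∀ z ∈ Q.roots, Q.IsRoot z := fun z hz =>
    (Polynomial.mem_roots hQ0).mp hz
  have habs : ∀ z ∈ Q.roots, ‖z‖ = r :=
    fun z hz => hroots z z₀ (hmem z hz) (hmem z₀ hz₀)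
  -- roots nonzero
  have h0 : (0 : ℂ) ∉ Q.roots := by
    intro h
    have := hmem 0 h
    rw [Polynomial.IsRoot, ← Polynomial.coeff_zero_eq_eval_zero] at this
    rw [hcoeff 0] at this
    have : |P.coeff 0| = 0 := by
      have := congrArg norm this
      simpa using this
    rw [hconst] at this; norm_num at this
  -- |lead Q| = 1
  have hleadQ : Q.leadingCoeff = ((P.leadingCoeff : ℝ) : ℂ) := by
    rw [hQdef, Polynomial.leadingCoeff_map]
    · rfl
  have habslead : ‖Q.leadingCoeff‖ = 1 := by
    rw [hleadQ, Complex.norm_real, Real.norm_eq_abs, hlead]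
  -- abs of prod of roots
  have habsprod : ‖Q.roots.prod‖ = r ^ n := by
    rw [show ‖Q.roots.prod‖ = (Q.roots.map norm).prod from map_multiset_prod (normHom : ℂ →*₀ ℝ) _]
    have hrep : Q.roots.map norm = Multiset.replicate n r := by
      rw [Multiset.eq_replicate]
      refine ⟨by rw [Multiset.card_map, hcard, hQdeg], fun x hx => ?_⟩
      obtain ⟨z, hz, rfl⟩ := Multiset.mem_map.mp hx
      exact habs z hz
    rw [hrep, Multiset.prod_replicate]
  -- r ^ n = 1 from constant coeff
  have hrn : r ^ n = 1 := by
    have h0le : (0:ℕ) ≤ Q.natDegree := Nat.zero_le _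
    have := Polynomial.coeff_eq_esymm_roots_of_card hcard (k := 0) h0le
    rw [Nat.sub_zero, ← hcard, my_esymm_card] at this
    have habs0 : ‖Q.coeff 0‖ = 1 := by
      rw [hcoeff 0, Complex.norm_real, Real.norm_eq_abs, hconst]
    rw [this] at habs0
    rw [norm_mul, norm_mul, habslead, norm_pow, norm_neg, norm_one, one_pow,
      habsprod] at habs0
    simpa using habs0
  have hr1 : r = 1 := by
    have hrnn : 0 ≤ r := norm_nonneg z₀
    rcases lt_trichotomy r 1 with h | h | h
    · have := pow_lt_one₀ hrnn h (by omega : n ≠ 0)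
      rw [hrn] at this; norm_num at this
    · exact h
    · have := one_lt_pow₀ h (by omega : n ≠ 0)
      rw [hrn] at this; norm_num at this
  -- sum of inverses = conj of sum
  have hinv : (Q.roots.map (·⁻¹)).sum = (starRingEnd ℂ) Q.roots.sum := by
    rw [map_multiset_sum]
    refine congrArg Multiset.sum (Multiset.map_congr rfl fun z hz => ?_)
    have hz1 : ‖z‖ = 1 := (habs z hz).trans hr1
    exact Complex.inv_eq_conj hz1
  -- coeff 1
  have hc1 : ‖Q.coeff 1‖ = ‖Q.roots.sum‖ := by
    have := Polynomial.coeff_eq_esymm_roots_of_card hcard (k := 1)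
      (by rw [hQdeg]; exact hdeg)
    rw [this]
    have hcard' : Multiset.card Q.roots - 1 = Q.natDegree - 1 := by rw [hcard]
    rw [← hcard', my_esymm_pred _ hrne h0, hinv]
    rw [norm_mul, norm_mul, norm_mul, habslead, norm_pow, norm_neg, norm_one,
      one_pow, habsprod, hrn, Complex.norm_conj]
    ring
  -- coeff n-1
  have hc2 : ‖Q.coeff (n - 1)‖ = ‖Q.roots.sum‖ := by
    have hle : n - 1 ≤ Q.natDegree := by rw [hQdeg]; omega
    have := Polynomial.coeff_eq_esymm_roots_of_card hcard (k := n - 1) hle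
    have hsub : Q.natDegree - (n - 1) = 1 := by rw [hQdeg]; omega
    rw [hsub] at this
    rw [this, my_esymm_one]
    rw [norm_mul, norm_mul, habslead, norm_pow, norm_neg, norm_one, one_pow]
    ring
  have e1 : ‖Q.coeff 1‖ = |P.coeff 1| := by
    rw [hcoeff 1, Complex.norm_real, Real.norm_eq_abs]
  have e2 : ‖Q.coeff (n - 1)‖ = |P.coeff (n - 1)| := by
    rw [hcoeff (n - 1), Complex.norm_real, Real.norm_eq_abs]
  rw [← e1, ← e2, hc1, hc2]
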